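/- Let n ≥ 3 and let P be the n×n cyclic shift permutation matrix, P_{ij} = 1 if j ≡ i+1 (mod n) and P_{ij} = 0 otherwise, so that P + Pᵀ is the adjacency matrix of the cycle C_n. Let A be the 2n×2n block matrix A = [[P+Pᵀ, P−Pᵀ],[Pᵀ−P, −(P+Pᵀ)]]. Then A is a real symmetric matrix with zero diagonal and entries in {-1,0,1}, and its eigenvalues are 2 and −2, each with multiplicity n; that is, dim ker(A − 2·I_{2n}) = n and dim ker(A + 2·I_{2n}) = n. -/

import Mathlib

open Matrix

/-- Let `n ≥ 3`, let `P` be the `n × n` cyclic shift permutation matrix (so `P + Pᵀ` is the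
adjacency matrix of the cycle `C_n`), and let
`A = [[P + Pᵀ, P − Pᵀ], [Pᵀ − P, −(P + Pᵀ)]]` be the signed adjacency matrix of the toroidal
tessellation `T_{2n}`.  Then `A` is symmetric with zero diagonal and entries in `{-1,0,1}`, and
its eigenvalues are `2` and `−2`, each with multiplicity `n`. -/
theorem toroidal_tessellation_two_eigenvalues (n : ℕ) (hn : 3 ≤ n)
    (P : Matrix (Fin n) (Fin n) ℝ)
    (hP : ∀ i j : Fin n, P i j = if (j : ℕ) = ((i : ℕ) + 1) % n then 1 else 0)
    (A : Matrix (Fin n ⊕ Fin n) (Fin n ⊕ Fin n) ℝ)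
    (hA : A = Matrix.fromBlocks (P + Pᵀ) (P - Pᵀ) (Pᵀ - P) (-(P + Pᵀ))) :
    Aᵀ = A ∧
    (∀ i, A i i = 0) ∧
    (∀ i j, A i j = -1 ∨ A i j = 0 ∨ A i j = 1) ∧
    Module.finrank ℝ
      (LinearMap.ker (A - (2 : ℝ) •
        (1 : Matrix (Fin n ⊕ Fin n) (Fin n ⊕ Fin n) ℝ)).mulVecLin) = n ∧
    Module.finrank ℝ
      (LinearMap.ker (A + (2 : ℝ) •
        (1 : Matrix (Fin n ⊕ Fin n) (Fin n ⊕ Fin n) ℝ)).mulVecLin) = n := by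
  haveI : NeZero n := ⟨by omega⟩
  -- basic facts about P
  have hsucc : ∀ i : Fin n, ((i + 1 : Fin n) : ℕ) = ((i : ℕ) + 1) % n := by
    intro i
    rw [Fin.val_add, Fin.val_one', Nat.one_mod_eq_one.mpr (by omega)]
  have hP' : ∀ i j : Fin n, P i j = if j = i + 1 then 1 else 0 := by
    intro i j
    rw [hP i j, ← hsucc i]
    simp [Fin.val_inj]
  have hmul1 : P * Pᵀ = 1 := by
    ext i j
    rw [mul_apply]
    simp only [hP', transpose_apply, ite_mul, one_mul, zero_mul]
    rw [Finset.sum_ite_eq']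
    simp [one_apply, add_left_inj]
  have hmul2 : Pᵀ * P = 1 := (mul_eq_one_comm).mp hmul1
  -- key block identities
  have hA2 : A * A = (4 : ℝ) • 1 := by
    rw [hA, fromBlocks_multiply]
    have h1 : ((4:ℝ) • 1 : Matrix (Fin n ⊕ Fin n) (Fin n ⊕ Fin n) ℝ)
        = fromBlocks ((4:ℝ) • 1) 0 0 ((4:ℝ) • 1) := by
      rw [← fromBlocks_one, fromBlocks_smul]
      simp
    rw [h1]
    have e1 : (P + Pᵀ) * (P + Pᵀ) + (P - Pᵀ) * (Pᵀ - P) = (4:ℝ) • 1 := by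
      have : (P + Pᵀ) * (P + Pᵀ) + (P - Pᵀ) * (Pᵀ - P)
          = P * Pᵀ + P * Pᵀ + (Pᵀ * P + Pᵀ * P) := by noncomm_ring
      rw [this, hmul1, hmul2]
      module
    have e2 : (P + Pᵀ) * (P - Pᵀ) + (P - Pᵀ) * -(P + Pᵀ) = 0 := by
      have : (P + Pᵀ) * (P - Pᵀ) + (P - Pᵀ) * -(P + Pᵀ)
          = Pᵀ * P + Pᵀ * P - (P * Pᵀ + P * Pᵀ) := by noncomm_ring
      rw [this, hmul1, hmul2]
      abel
    have e3 : (Pᵀ - P) * (P + Pᵀ) + -(P + Pᵀ) * (Pᵀ - P) = 0 := by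
      have : (Pᵀ - P) * (P + Pᵀ) + -(P + Pᵀ) * (Pᵀ - P)
          = Pᵀ * P + Pᵀ * P - (P * Pᵀ + P * Pᵀ) := by noncomm_ring
      rw [this, hmul1, hmul2]
      abel
    have e4 : (Pᵀ - P) * (P - Pᵀ) + -(P + Pᵀ) * -(P + Pᵀ) = (4:ℝ) • 1 := by
      have : (Pᵀ - P) * (P - Pᵀ) + -(P + Pᵀ) * -(P + Pᵀ)
          = P * Pᵀ + P * Pᵀ + (Pᵀ * P + Pᵀ * P) := by noncomm_ring
      rw [this, hmul1, hmul2]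
      module
    rw [e1, e2, e3, e4]
  -- the swap matrix J
  set J : Matrix (Fin n ⊕ Fin n) (Fin n ⊕ Fin n) ℝ := fromBlocks 0 1 1 0 with hJ
  have hJJ : J * J = 1 := by
    rw [hJ, fromBlocks_multiply, ← fromBlocks_one]
    simp
  have hAJ : A * J = -(J * A) := by
    rw [hA, hJ, fromBlocks_multiply, fromBlocks_multiply, fromBlocks_neg]
    simp
  -- abbreviations
  set Mm : Matrix (Fin n ⊕ Fin n) (Fin n ⊕ Fin n) ℝ := A - (2:ℝ) • 1 with hMm
  set Mp : Matrix (Fin n ⊕ Fin n) (Fin n ⊕ Fin n) ℝ := A + (2:ℝ) • 1 with hMp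
  have hmp : Mm * Mp = 0 := by
    have h : Mm * Mp = A * A - (4:ℝ) • 1 := by
      rw [hMm, hMp]
      simp only [Matrix.sub_mul, Matrix.mul_add, Matrix.smul_mul, Matrix.mul_smul,
        Matrix.one_mul, Matrix.mul_one]
      module
    rw [h, hA2, sub_self]
  have hpm : Mp * Mm = 0 := by
    have h : Mp * Mm = A * A - (4:ℝ) • 1 := by
      rw [hMm, hMp]
      simp only [Matrix.add_mul, Matrix.mul_sub, Matrix.smul_mul, Matrix.mul_smul,
        Matrix.one_mul, Matrix.mul_one]
      module
    rw [h, hA2, sub_self]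
  have hMpJ : Mp * J = -(J * Mm) := by
    rw [hMm, hMp, Matrix.add_mul, Matrix.mul_sub, hAJ, Matrix.smul_mul, Matrix.mul_smul,
      Matrix.one_mul, Matrix.mul_one]
    abel
  have hMmJ : Mm * J = -(J * Mp) := by
    rw [hMm, hMp, Matrix.sub_mul, Matrix.mul_add, hAJ, Matrix.smul_mul, Matrix.mul_smul,
      Matrix.one_mul, Matrix.mul_one]
    abel
  -- kernels
  set f := Mm.mulVecLin with hf
  set g := Mp.mulVecLin with hg
  have hsup : LinearMap.ker f ⊔ LinearMap.ker g = ⊤ := by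
    rw [eq_top_iff]
    intro v _
    rw [Submodule.mem_sup]
    refine ⟨(4:ℝ)⁻¹ • Mp.mulVec v, ?_, -((4:ℝ)⁻¹ • Mm.mulVec v), ?_, ?_⟩
    · rw [LinearMap.mem_ker, hf]
      simp only [mulVecLin_apply, Matrix.mulVec_smul, Matrix.mulVec_mulVec, hmp,
        Matrix.zero_mulVec, smul_zero]
    · rw [LinearMap.mem_ker, hg]
      simp only [mulVecLin_apply, Matrix.mulVec_neg, Matrix.mulVec_smul,
        Matrix.mulVec_mulVec, hpm, Matrix.zero_mulVec, smul_zero, neg_zero]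
    · have : Mp.mulVec v - Mm.mulVec v = (4:ℝ) • v := by
        rw [← Matrix.sub_mulVec]
        have : Mp - Mm = (4:ℝ) • 1 := by rw [hMp, hMm]; abel_nf; rw [← smul_assoc]; norm_num
        rw [this, Matrix.smul_mulVec, Matrix.one_mulVec]
      rw [← smul_neg, ← smul_add, ← sub_eq_add_neg, this, smul_smul]
      norm_num
  have hinf : LinearMap.ker f ⊓ LinearMap.ker g = ⊥ := by
    rw [eq_bot_iff]
    intro v hv
    rw [Submodule.mem_inf] at hv
    obtain ⟨hv1, hv2⟩ := hv
    rw [LinearMap.mem_ker, hf, mulVecLin_apply] at hv1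
    rw [LinearMap.mem_ker, hg, mulVecLin_apply] at hv2
    have h4 : (Mp - Mm).mulVec v = 0 := by rw [Matrix.sub_mulVec, hv1, hv2]; simp
    have hd : Mp - Mm = (4:ℝ) • 1 := by rw [hMp, hMm]; abel_nf; rw [← smul_assoc]; norm_num
    rw [hd, Matrix.smul_mulVec, Matrix.one_mulVec] at h4
    have : v = 0 := by
      have := congrArg (fun w => (4:ℝ)⁻¹ • w) h4
      simpa [smul_smul] using this
    simp [this]
  -- the equivalence via J
  have hJid : J.mulVecLin ∘ₗ J.mulVecLin = LinearMap.id := by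
    rw [← Matrix.mulVecLin_mul, hJJ, Matrix.mulVecLin_one]
  have hmap : Submodule.map J.mulVecLin (LinearMap.ker f) = LinearMap.ker g := by
    ext w
    simp only [Submodule.mem_map, LinearMap.mem_ker]
    constructor
    · rintro ⟨v, hv, rfl⟩
      rw [hf, mulVecLin_apply] at hv
      rw [hg, mulVecLin_apply, mulVecLin_apply, Matrix.mulVec_mulVec, hMpJ, Matrix.neg_mulVec,
        ← Matrix.mulVec_mulVec, hv]
      simp
    · intro hw
      rw [hg, mulVecLin_apply] at hw
      refine ⟨J.mulVec w, ?_, ?_⟩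
      · rw [hf, mulVecLin_apply, Matrix.mulVec_mulVec, hMmJ, Matrix.neg_mulVec,
          ← Matrix.mulVec_mulVec, hw]
        simp
      · rw [mulVecLin_apply, Matrix.mulVec_mulVec, hJJ, Matrix.one_mulVec]
  have hrank_eq : Module.finrank ℝ (LinearMap.ker f) = Module.finrank ℝ (LinearMap.ker g) := by
    rw [← hmap]
    let eJ : ((Fin n ⊕ Fin n) → ℝ) ≃ₗ[ℝ] ((Fin n ⊕ Fin n) → ℝ) :=
      LinearEquiv.ofLinear J.mulVecLin J.mulVecLin hJid hJid
    have hco : Submodule.map J.mulVecLin (LinearMap.ker f)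
        = Submodule.map (eJ : ((Fin n ⊕ Fin n) → ℝ) →ₗ[ℝ] ((Fin n ⊕ Fin n) → ℝ))
          (LinearMap.ker f) := rfl
    rw [hco]
    exact (LinearEquiv.finrank_map_eq eJ (LinearMap.ker f)).symm
  have hdim : Module.finrank ℝ (LinearMap.ker f) + Module.finrank ℝ (LinearMap.ker g)
      = n + n := by
    have := Submodule.finrank_sup_add_finrank_inf_eq (LinearMap.ker f) (LinearMap.ker g)
    rw [hsup, hinf] at this
    simp only [finrank_top, finrank_bot, add_zero] at this
    rw [← this, Module.finrank_fintype_fun_eq_card]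
    simp [two_mul]
  refine ⟨?_, ?_, ?_, ?_, ?_⟩
  · -- symmetric
    rw [hA, fromBlocks_transpose]
    simp [transpose_add, transpose_sub, transpose_neg]
    constructor <;> abel
  · -- zero diagonal
    have hPd : ∀ i : Fin n, P i i = 0 := by
      intro i
      rw [hP]
      have : ((i : ℕ) + 1) % n ≠ (i : ℕ) := by
        rcases Nat.lt_or_ge ((i : ℕ) + 1) n with h | h
        · rw [Nat.mod_eq_of_lt h]; omega
        · have : (i : ℕ) + 1 = n := by have := i.isLt; omega
          rw [this, Nat.mod_self]; omega
      simp [this.symm]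
    rintro (i | i) <;> rw [hA]
    · rw [fromBlocks_apply₁₁, Matrix.add_apply, transpose_apply, hPd, add_zero]
    · rw [fromBlocks_apply₂₂, Matrix.neg_apply, Matrix.add_apply, transpose_apply, hPd, add_zero, neg_zero]
  · -- entries in {-1,0,1}
    have hdisj : ∀ i j : Fin n, ¬((j:ℕ) = ((i:ℕ)+1) % n ∧ (i:ℕ) = ((j:ℕ)+1) % n) := by
      rintro i j ⟨h1, h2⟩
      have hi := i.isLt
      have hj := j.isLt
      rcases Nat.lt_or_ge ((i : ℕ) + 1) n with h | h
      · rw [Nat.mod_eq_of_lt h] at h1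
        rcases Nat.lt_or_ge ((j : ℕ) + 1) n with h' | h'
        · rw [Nat.mod_eq_of_lt h'] at h2; omega
        · have : (j:ℕ) + 1 = n := by omega
          rw [this, Nat.mod_self] at h2; omega
      · have : (i:ℕ) + 1 = n := by omega
        rw [this, Nat.mod_self] at h1
        have : (j:ℕ) + 1 = 1 := by omega
        rw [this] at h2
        rw [Nat.mod_eq_of_lt (by omega)] at h2
        omega
    have key : ∀ i j : Fin n,
        ((P + Pᵀ) i j = -1 ∨ (P + Pᵀ) i j = 0 ∨ (P + Pᵀ) i j = 1) ∧
        ((P - Pᵀ) i j = -1 ∨ (P - Pᵀ) i j = 0 ∨ (P - Pᵀ) i j = 1) := by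
      intro i j
      have hd := hdisj i j
      simp only [Matrix.add_apply, Matrix.sub_apply, transpose_apply, hP]
      by_cases h1 : (j:ℕ) = ((i:ℕ)+1) % n <;> by_cases h2 : (i:ℕ) = ((j:ℕ)+1) % n
      · exact absurd ⟨h1, h2⟩ hd
      · rw [if_pos h1, if_neg h2]; norm_num
      · rw [if_neg h1, if_pos h2]; norm_num
      · rw [if_neg h1, if_neg h2]; norm_num
    rintro (i | i) (j | j) <;> rw [hA]
    · simpa [fromBlocks_apply₁₁] using (key i j).1
    · simpa [fromBlocks_apply₁₂] using (key i j).2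
    · have := (key j i).2
      simp only [fromBlocks_apply₂₁, Matrix.sub_apply, transpose_apply] at this ⊢
      exact this
    · have := (key i j).1
      simp only [fromBlocks_apply₂₂, Matrix.neg_apply, Matrix.add_apply, transpose_apply] at this ⊢
      rcases this with h | h | h
      · right; right; linarith
      · right; left; linarith
      · left; linarith
  · omega
  · omega
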